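/- Let α, β ∈ (0,1) and let f₀(x,y) = Σ_{j=1}^{∞} M_j^{−(α+β)} r_j(x) r_j(y) ∈ C(G_m²). Then there is a constant C > 0 (depending only on α, β and the sequence m) such that for every n ∈ ℕ, ω(f₀,1/M_n)_C ≤ C · (1/M_n)^{α+β}; that is, ω(f₀,1/M_n)_C = O((1/M_n)^{α+β}). -/

import Mathlib

open MeasureTheory Filter Finset
open scoped ENNReal NNReal Real

noncomputable section

namespace Vilenkin

/-- The bounded Vilenkin group: complete direct product of the cyclic groups `ZMod (m k)`. -/
abbrev G (m : ℕ → ℕ) : Type := ∀ k, ZMod (m k)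

/-- The generalized number system `M 0 = 1`, `M (k+1) = m k * M k`. -/
def M (m : ℕ → ℕ) : ℕ → ℕ
  | 0 => 1
  | k + 1 => m k * M m k

/-- The cylinder neighbourhood `I n = {x | x 0 = ⋯ = x (n-1) = 0}`. -/
def I (m : ℕ → ℕ) (n : ℕ) : Set (G m) := {x | ∀ j < n, x j = 0}

/-- The `j`-th digit of `n` in the generalized number system based on `m`. -/
def digit (m : ℕ → ℕ) (n j : ℕ) : ℕ := n / M m j % m j

/-- The generalized Rademacher functions `r k x = exp (2 π i x_k / m_k)`. -/
def rad (m : ℕ → ℕ) (k : ℕ) (x : G m) : ℂ :=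
  Complex.exp (2 * Real.pi * Complex.I * ((x k).val : ℂ) / (m k : ℂ))

/-- The Vilenkin system `ψ n = ∏ k, (r k) ^ (n_k)`. -/
def psi (m : ℕ → ℕ) (n : ℕ) (x : G m) : ℂ :=
  ∏ k ∈ Finset.range (n + 1), rad m k x ^ digit m n k

/-- The Vilenkin-Dirichlet kernels `D n = ∑_{k<n} ψ k`. -/
def D (m : ℕ → ℕ) (n : ℕ) (x : G m) : ℂ := ∑ k ∈ Finset.range n, psi m k x

/-- The Cesàro numbers `A n α = (α+1)⋯(α+n)/n!`. -/
def A (α : ℝ) (n : ℕ) : ℝ := (∏ i ∈ Finset.range n, (α + (i + 1))) / (n.factorial : ℝ)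

/-- One-dimensional Vilenkin-Fourier coefficients. -/
def fhat1 (m : ℕ → ℕ) (μ : Measure (G m)) (f : G m → ℂ) (i : ℕ) : ℂ :=
  ∫ x, f x * (starRingEnd ℂ) (psi m i x) ∂μ

/-- One-dimensional `(C,-α)` Cesàro means of the Vilenkin-Fourier series. -/
def cesaro1 (m : ℕ → ℕ) (μ : Measure (G m)) (α : ℝ) (f : G m → ℂ) (n : ℕ) (x : G m) : ℂ :=
  ((A (-α) n : ℝ) : ℂ)⁻¹ *
    ∑ i ∈ Finset.range (n + 1), ((A (-α) (n - i) : ℝ) : ℂ) * fhat1 m μ f i * psi m i x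

/-- Double Vilenkin-Fourier coefficients. -/
def fhat2 (m : ℕ → ℕ) (μ : Measure (G m)) (f : G m × G m → ℂ) (i j : ℕ) : ℂ :=
  ∫ z, f z * (starRingEnd ℂ) (psi m i z.1) * (starRingEnd ℂ) (psi m j z.2) ∂(μ.prod μ)

/-- Rectangular partial sums of the double Vilenkin-Fourier series. -/
def partialSum2 (m : ℕ → ℕ) (μ : Measure (G m)) (f : G m × G m → ℂ) (n₁ n₂ : ℕ)
    (z : G m × G m) : ℂ :=
  ∑ k₁ ∈ Finset.range n₁, ∑ k₂ ∈ Finset.range n₂,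
    fhat2 m μ f k₁ k₂ * psi m k₁ z.1 * psi m k₂ z.2

/-- The `(C,-α,-β)` means of the double Vilenkin-Fourier series. -/
def cesaro2 (m : ℕ → ℕ) (μ : Measure (G m)) (α β : ℝ) (f : G m × G m → ℂ) (n₁ n₂ : ℕ)
    (z : G m × G m) : ℂ :=
  ((A (-α) n₁ * A (-β) n₂ : ℝ) : ℂ)⁻¹ *
    ∑ i ∈ Finset.range (n₁ + 1), ∑ j ∈ Finset.range (n₂ + 1),
      ((A (-α) (n₁ - i) * A (-β) (n₂ - j) : ℝ) : ℂ) * fhat2 m μ f i j * psi m i z.1 * psi m j z.2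

/-- One-dimensional modulus of continuity in `L^p`. -/
def omegaOne (m : ℕ → ℕ) (μ : Measure (G m)) (p : ℝ≥0∞) (f : G m → ℂ) (n : ℕ) : ℝ≥0∞ :=
  ⨆ u ∈ I m n, eLpNorm (fun x => f (x - u) - f x) p μ

/-- First partial modulus of continuity in `L^p`. -/
def omega1 (m : ℕ → ℕ) (μ : Measure (G m)) (p : ℝ≥0∞) (f : G m × G m → ℂ) (n : ℕ) : ℝ≥0∞ :=
  ⨆ u ∈ I m n, eLpNorm (fun z => f (z.1 - u, z.2) - f z) p (μ.prod μ)

/-- Second partial modulus of continuity in `L^p`. -/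
def omega2 (m : ℕ → ℕ) (μ : Measure (G m)) (p : ℝ≥0∞) (f : G m × G m → ℂ) (n : ℕ) : ℝ≥0∞ :=
  ⨆ v ∈ I m n, eLpNorm (fun z => f (z.1, z.2 - v) - f z) p (μ.prod μ)

/-- Mixed modulus of continuity in `L^p`. -/
def omega12 (m : ℕ → ℕ) (μ : Measure (G m)) (p : ℝ≥0∞) (f : G m × G m → ℂ) (n l : ℕ) : ℝ≥0∞ :=
  ⨆ u ∈ I m n, ⨆ v ∈ I m l,
    eLpNorm (fun z => f (z.1 - u, z.2 - v) - f (z.1 - u, z.2) - f (z.1, z.2 - v) + f z) p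
      (μ.prod μ)

/-- Total modulus of continuity in `L^p`. -/
def omegaT (m : ℕ → ℕ) (μ : Measure (G m)) (p : ℝ≥0∞) (f : G m × G m → ℂ) (n : ℕ) : ℝ≥0∞ :=
  ⨆ u ∈ I m n, ⨆ v ∈ I m n, eLpNorm (fun z => f (z.1 - u, z.2 - v) - f z) p (μ.prod μ)

/-- Total modulus of continuity in the uniform norm. -/
def omegaC (m : ℕ → ℕ) (f : G m × G m → ℂ) (n : ℕ) : ℝ≥0∞ :=
  ⨆ u ∈ I m n, ⨆ v ∈ I m n, ⨆ z : G m × G m, (‖f (z.1 - u, z.2 - v) - f z‖₊ : ℝ≥0∞)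


lemma M_pos (m : ℕ → ℕ) (hm2 : ∀ k, 2 ≤ m k) (k : ℕ) : 0 < M m k := by
  induction k with
  | zero => simp [M]
  | succ k ih =>
    have : M m (k + 1) = m k * M m k := rfl
    rw [this]
    exact Nat.mul_pos (lt_of_lt_of_le (by norm_num) (hm2 k)) ih

lemma M_growth (m : ℕ → ℕ) (hm2 : ∀ k, 2 ≤ m k) (n i : ℕ) :
    2 ^ i * M m n ≤ M m (n + i) := by
  induction i with
  | zero => simp
  | succ i ih =>
    have h : M m (n + i + 1) = m (n + i) * M m (n + i) := rfl
    calc 2 ^ (i + 1) * M m n = 2 * (2 ^ i * M m n) := by ring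
    _ ≤ 2 * M m (n + i) := Nat.mul_le_mul_left 2 ih
    _ ≤ m (n + i) * M m (n + i) := Nat.mul_le_mul_right _ (hm2 _)
    _ = M m (n + (i + 1)) := by rw [← h]; ring_nf

lemma rad_norm (m : ℕ → ℕ) (k : ℕ) (x : G m) : ‖rad m k x‖ = 1 := by
  have h : (2 * Real.pi * Complex.I * (((x k).val : ℕ) : ℂ) / (m k : ℂ))
      = ((2 * Real.pi * (((x k).val : ℕ) : ℝ) / (m k : ℝ) : ℝ) : ℂ) * Complex.I := by
    push_cast
    ring
  rw [rad, h]
  exact Complex.norm_exp_ofReal_mul_I _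

lemma rad_shift (m : ℕ → ℕ) (k : ℕ) (x u : G m) (h : u k = 0) :
    rad m k (x - u) = rad m k x := by
  have hx : (x - u) k = x k := by simp [Pi.sub_apply, h]
  rw [rad, rad, hx]

theorem statement_15 (m : ℕ → ℕ) (hm2 : ∀ k, 2 ≤ m k) (hmbd : ∃ B, ∀ k, m k ≤ B)
    (α β : ℝ) (hα : α ∈ Set.Ioo (0 : ℝ) 1) (hβ : β ∈ Set.Ioo (0 : ℝ) 1) (f₀ : G m × G m → ℂ)
    (hf₀ : ∀ z : G m × G m, f₀ z = ∑' j : ℕ,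
      (((M m (j + 1) : ℝ) ^ (-(α + β)) : ℝ) : ℂ) * rad m (j + 1) z.1 * rad m (j + 1) z.2) :
    ∃ C : ℝ≥0, 0 < C ∧ ∀ n : ℕ,
      omegaC m f₀ n ≤ C * ((M m n : ℝ≥0∞)⁻¹) ^ (α + β) := by
  obtain ⟨hα0, hα1⟩ := hα
  obtain ⟨hβ0, hβ1⟩ := hβ
  set γ : ℝ := α + β with hγdef
  have hγ : 0 < γ := by positivity
  set r : ℝ := (2 : ℝ) ^ (-γ) with hrdef
  have hr0 : 0 < r := Real.rpow_pos_of_pos (by norm_num) _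
  have hr1 : r < 1 := Real.rpow_lt_one_of_one_lt_of_neg (by norm_num) (by linarith)
  have hMpos : ∀ k, (0 : ℝ) < (M m k : ℝ) := fun k => by exact_mod_cast M_pos m hm2 k
  set c : ℕ → ℝ := fun j => (M m (j + 1) : ℝ) ^ (-γ) with hcdef
  have hc0 : ∀ j, 0 ≤ c j := fun j => Real.rpow_nonneg (le_of_lt (hMpos _)) _
  have anti : ∀ a b : ℝ, 0 < a → a ≤ b → b ^ (-γ) ≤ a ^ (-γ) := by
    intro a b ha hab
    rw [Real.rpow_neg ha.le, Real.rpow_neg (ha.trans_le hab).le]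
    exact inv_anti₀ (Real.rpow_pos_of_pos ha γ)
      (Real.rpow_le_rpow ha.le hab hγ.le)
  have h2pow : ∀ i : ℕ, ((2 : ℝ) ^ i) ^ (-γ) = r ^ i := by
    intro i
    rw [← Real.rpow_natCast (2 : ℝ) i, ← Real.rpow_mul (by norm_num), mul_comm,
      Real.rpow_mul (by norm_num), Real.rpow_natCast]
  set t : ℕ → G m × G m → ℂ :=
    fun j z => ((c j : ℝ) : ℂ) * rad m (j + 1) z.1 * rad m (j + 1) z.2 with htdef
  have hf : ∀ z, f₀ z = ∑' j, t j z := hf₀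
  have hnorm_t : ∀ j z, ‖t j z‖ = c j := by
    intro j z
    rw [htdef]
    simp only [norm_mul, rad_norm, Complex.norm_real, Real.norm_eq_abs,
      abs_of_nonneg (hc0 j), mul_one]
  have hcr' : ∀ j, c j ≤ r ^ j := by
    intro j
    have h1 : ((2 : ℝ) ^ (j + 1)) ≤ (M m (j + 1) : ℝ) := by
      have := M_growth m hm2 0 (j + 1)
      simp only [M, Nat.mul_one, Nat.zero_add] at this
      have h' : 2 ^ (j + 1) ≤ M m (j + 1) := by simpa [M] using this
      exact_mod_cast h'
    calc c j ≤ ((2 : ℝ) ^ (j + 1)) ^ (-γ) := anti _ _ (by positivity) h1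
    _ = r ^ (j + 1) := h2pow (j + 1)
    _ = r ^ j * r := pow_succ r j
    _ ≤ r ^ j := mul_le_of_le_one_right (pow_nonneg hr0.le j) hr1.le
  have hgeo : Summable (fun j : ℕ => r ^ j) := summable_geometric_of_lt_one hr0.le hr1
  have hsum : ∀ z : G m × G m, Summable (fun j => t j z) := by
    intro z
    refine Summable.of_norm_bounded hgeo fun j => ?_
    rw [hnorm_t]
    exact hcr' j
  set Creal : ℝ := 2 * (1 - r)⁻¹ with hCdef
  have hCpos : 0 < Creal := by
    have : 0 < 1 - r := by linarith
    positivity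
  refine ⟨Creal.toNNReal, Real.toNNReal_pos.mpr hCpos, fun n => ?_⟩
  have hRHS : (Creal.toNNReal : ℝ≥0∞) * ((M m n : ℝ≥0∞)⁻¹) ^ γ
      = ENNReal.ofReal (Creal * (M m n : ℝ) ^ (-γ)) := by
    rw [ENNReal.ofReal_mul hCpos.le]
    congr 1
    rw [ENNReal.inv_rpow, ← ENNReal.rpow_neg, ← ENNReal.ofReal_natCast (M m n),
      ENNReal.ofReal_rpow_of_pos (hMpos n)]
  rw [hRHS, omegaC]
  refine iSup₂_le fun u hu => iSup₂_le fun v hv => iSup_le fun z => ?_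
  rw [← enorm_eq_nnnorm, ← ofReal_norm]
  apply ENNReal.ofReal_le_ofReal
  set z' : G m × G m := (z.1 - u, z.2 - v) with hz'
  have hdsum : Summable (fun j => ‖t j z' - t j z‖) := by
    refine Summable.of_nonneg_of_le (fun j => norm_nonneg _) (fun j => ?_)
      (hgeo.mul_left 2)
    calc ‖t j z' - t j z‖ ≤ ‖t j z'‖ + ‖t j z‖ := norm_sub_le _ _
    _ = 2 * c j := by rw [hnorm_t, hnorm_t]; ring
    _ ≤ 2 * r ^ j := by have := hcr' j; linarith
  have hdiff : f₀ z' - f₀ z = ∑' j, (t j z' - t j z) := by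
    rw [hf, hf]
    exact ((hsum z').tsum_sub (hsum z)).symm
  rw [hdiff]
  set k : ℕ := n - 1 with hk
  have hk1 : n ≤ k + 1 := by omega
  have hzero : ∀ j < k, ‖t j z' - t j z‖ = 0 := by
    intro j hj
    have hu' : u (j + 1) = 0 := hu (j + 1) (by omega)
    have hv' : v (j + 1) = 0 := hv (j + 1) (by omega)
    have : t j z' = t j z := by
      rw [htdef]
      simp only [hz']
      rw [rad_shift m (j + 1) z.1 u hu', rad_shift m (j + 1) z.2 v hv']
    rw [this, sub_self, norm_zero]
  have htail : ∀ i : ℕ, ‖t (i + k) z' - t (i + k) z‖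
      ≤ (2 * (M m n : ℝ) ^ (-γ)) * r ^ i := by
    intro i
    have hnat : 2 ^ i * M m n ≤ M m (i + k + 1) := by
      have h1 := M_growth m hm2 n (i + k + 1 - n)
      have h2 : n + (i + k + 1 - n) = i + k + 1 := by omega
      rw [h2] at h1
      calc 2 ^ i * M m n ≤ 2 ^ (i + k + 1 - n) * M m n :=
        Nat.mul_le_mul_right _ (Nat.pow_le_pow_right (by norm_num) (by omega))
      _ ≤ M m (i + k + 1) := h1
    have hreal : ((2 : ℝ) ^ i * (M m n : ℝ)) ≤ (M m (i + k + 1) : ℝ) := by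
      exact_mod_cast hnat
    have hcbd : c (i + k) ≤ (M m n : ℝ) ^ (-γ) * r ^ i := by
      calc c (i + k) ≤ ((2 : ℝ) ^ i * (M m n : ℝ)) ^ (-γ) :=
        anti _ _ (by have := hMpos n; positivity) hreal
      _ = ((2 : ℝ) ^ i) ^ (-γ) * (M m n : ℝ) ^ (-γ) :=
        Real.mul_rpow (by positivity) (hMpos n).le
      _ = (M m n : ℝ) ^ (-γ) * r ^ i := by rw [h2pow i]; ring
    calc ‖t (i + k) z' - t (i + k) z‖ ≤ ‖t (i + k) z'‖ + ‖t (i + k) z‖ :=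
      norm_sub_le _ _
    _ = 2 * c (i + k) := by rw [hnorm_t, hnorm_t]; ring
    _ ≤ (2 * (M m n : ℝ) ^ (-γ)) * r ^ i := by nlinarith
  calc ‖∑' j, (t j z' - t j z)‖ ≤ ∑' j, ‖t j z' - t j z‖ := norm_tsum_le_tsum_norm hdsum
  _ = ∑ j ∈ Finset.range k, ‖t j z' - t j z‖ + ∑' i, ‖t (i + k) z' - t (i + k) z‖ :=
      (hdsum.sum_add_tsum_nat_add k).symm
  _ = ∑' i, ‖t (i + k) z' - t (i + k) z‖ := by
      rw [Finset.sum_eq_zero fun j hj => hzero j (Finset.mem_range.mp hj), zero_add]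
  _ ≤ ∑' i : ℕ, (2 * (M m n : ℝ) ^ (-γ)) * r ^ i :=
      Summable.tsum_le_tsum htail (hdsum.comp_injective (add_left_injective k))
        (hgeo.mul_left _)
  _ = (2 * (M m n : ℝ) ^ (-γ)) * (1 - r)⁻¹ := by
      rw [tsum_mul_left, tsum_geometric_of_lt_one hr0.le hr1]
  _ = Creal * (M m n : ℝ) ^ (-γ) := by rw [hCdef]; ring


end Vilenkin
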